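/- Let Λ > 0 and let p₀ ∈ (0, π/2) be defined by cos p₀ = 1/cosh(2Λ). For an integer m ≥ 0 define G(m) = (1/(4π²)) ∫_{−Λ}^{Λ}∫_{−Λ}^{Λ} ( φ(λ₁)^m φ(λ₂)^{−m} + φ(λ₁)^{−m} φ(λ₂)^m − 2 ) / sinh²(λ₁ − λ₂) dλ₁ dλ₂ (the integrand has a removable singularity at λ₁ = λ₂ and G(0) = 0). Then for every integer m ≥ 1, the second lattice derivative satisfies G(m+1) + G(m−1) − 2G(m) = −(1/(π² m²)) (1 − cos(2 m p₀)). -/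

import Mathlib

open Real MeasureTheory

/-- The function `φ(z) = sinh(z - iπ/4)/sinh(z + iπ/4)`. -/
noncomputable def phi (z : ℂ) : ℂ :=
  Complex.sinh (z - Complex.I * (π : ℂ) / 4) / Complex.sinh (z + Complex.I * (π : ℂ) / 4)

lemma shiftA (z : ℂ) : Complex.sinh (z + Complex.I * (π:ℂ) / 4)
    = ((Real.sqrt 2 / 2 : ℝ) : ℂ) * (Complex.sinh z + Complex.I * Complex.cosh z) := by
  have h1 : Complex.I * (π:ℂ)/4 = ((π/4 : ℝ):ℂ) * Complex.I := by push_cast; ring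
  rw [h1, Complex.sinh_add, Complex.cosh_mul_I, Complex.sinh_mul_I,
    ← Complex.ofReal_cos, ← Complex.ofReal_sin, Real.cos_pi_div_four, Real.sin_pi_div_four]
  ring

lemma shiftB (z : ℂ) : Complex.sinh (z - Complex.I * (π:ℂ) / 4)
    = ((Real.sqrt 2 / 2 : ℝ) : ℂ) * (Complex.sinh z - Complex.I * Complex.cosh z) := by
  have h1 : Complex.I * (π:ℂ)/4 = ((π/4 : ℝ):ℂ) * Complex.I := by push_cast; ring
  rw [h1, Complex.sinh_sub, Complex.cosh_mul_I, Complex.sinh_mul_I,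
    ← Complex.ofReal_cos, ← Complex.ofReal_sin, Real.cos_pi_div_four, Real.sin_pi_div_four]
  ring

lemma hc2 : (((Real.sqrt 2 / 2 : ℝ) : ℂ))^2 = 1/2 := by
  have : (Real.sqrt 2)^2 = 2 := Real.sq_sqrt (by norm_num)
  push_cast
  rw [div_pow]
  norm_cast
  rw [this]
  norm_num

lemma spA_ne (x : ℝ) : Complex.sinh ((x:ℂ) + Complex.I * (π:ℂ)/4) ≠ 0 := by
  rw [shiftA]
  apply mul_ne_zero
  · simp only [ne_eq, Complex.ofReal_eq_zero]
    positivity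
  · intro h
    have him := congrArg Complex.im h
    simp [← Complex.ofReal_sinh, ← Complex.ofReal_cosh] at him
    exact (Real.cosh_pos x).ne' him

lemma spB_ne (x : ℝ) : Complex.sinh ((x:ℂ) - Complex.I * (π:ℂ)/4) ≠ 0 := by
  rw [shiftB]
  apply mul_ne_zero
  · simp only [ne_eq, Complex.ofReal_eq_zero]
    positivity
  · intro h
    have him := congrArg Complex.im h
    simp [← Complex.ofReal_sinh, ← Complex.ofReal_cosh] at him
    exact (Real.cosh_pos x).ne' him

lemma phi_ne (x : ℝ) : phi (x:ℂ) ≠ 0 :=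
  div_ne_zero (spB_ne x) (spA_ne x)

-- product: 2 sinh(z-A) sinh(z+A) = cosh (2z)
lemma prod_eq (z : ℂ) : 2 * Complex.sinh (z - Complex.I * (π:ℂ)/4) * Complex.sinh (z + Complex.I * (π:ℂ)/4)
    = Complex.cosh (2*z) := by
  rw [shiftA, shiftB, Complex.cosh_two_mul]
  have h1 := Complex.cosh_sq_sub_sinh_sq z
  linear_combination 2*(Complex.sinh z^2 - Complex.I^2*Complex.cosh z^2)*hc2 - Complex.cosh z^2*(Complex.I_sq)

lemma diff_eq (x y : ℂ) :
    Complex.sinh (x - Complex.I * (π:ℂ)/4) * Complex.sinh (y + Complex.I * (π:ℂ)/4)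
      - Complex.sinh (y - Complex.I * (π:ℂ)/4) * Complex.sinh (x + Complex.I * (π:ℂ)/4)
    = Complex.I * Complex.sinh (x - y) := by
  rw [shiftA, shiftA, shiftB, shiftB, Complex.sinh_sub]
  linear_combination 2*Complex.I*(Complex.sinh x * Complex.cosh y - Complex.cosh x * Complex.sinh y)*hc2

lemma shiftAc (z : ℂ) : Complex.cosh (z + Complex.I * (π:ℂ) / 4)
    = ((Real.sqrt 2 / 2 : ℝ) : ℂ) * (Complex.cosh z + Complex.I * Complex.sinh z) := by
  have h1 : Complex.I * (π:ℂ)/4 = ((π/4 : ℝ):ℂ) * Complex.I := by push_cast; ring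
  rw [h1, Complex.cosh_add, Complex.cosh_mul_I, Complex.sinh_mul_I,
    ← Complex.ofReal_cos, ← Complex.ofReal_sin, Real.cos_pi_div_four, Real.sin_pi_div_four]
  ring

lemma shiftBc (z : ℂ) : Complex.cosh (z - Complex.I * (π:ℂ) / 4)
    = ((Real.sqrt 2 / 2 : ℝ) : ℂ) * (Complex.cosh z - Complex.I * Complex.sinh z) := by
  have h1 : Complex.I * (π:ℂ)/4 = ((π/4 : ℝ):ℂ) * Complex.I := by push_cast; ring
  rw [h1, Complex.cosh_sub, Complex.cosh_mul_I, Complex.sinh_mul_I,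
    ← Complex.ofReal_cos, ← Complex.ofReal_sin, Real.cos_pi_div_four, Real.sin_pi_div_four]
  ring

lemma wronsk (z : ℂ) :
    Complex.cosh (z - Complex.I * (π:ℂ)/4) * Complex.sinh (z + Complex.I * (π:ℂ)/4)
      - Complex.sinh (z - Complex.I * (π:ℂ)/4) * Complex.cosh (z + Complex.I * (π:ℂ)/4)
    = Complex.I := by
  rw [shiftA, shiftBc, shiftB, shiftAc]
  have h1 := Complex.cosh_sq_sub_sinh_sq z
  linear_combination 2*Complex.I*(Complex.cosh z^2 - Complex.sinh z^2)*hc2 + Complex.I*h1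

lemma hasDerivAt_phi (z : ℂ) (hp : Complex.sinh (z + Complex.I * (π:ℂ)/4) ≠ 0) :
    HasDerivAt phi (Complex.I / (Complex.sinh (z + Complex.I * (π:ℂ)/4))^2) z := by
  have hd1 : HasDerivAt (fun w => Complex.sinh (w - Complex.I*(π:ℂ)/4))
      (Complex.cosh (z - Complex.I*(π:ℂ)/4)) z := by
    exact ((Complex.hasDerivAt_sinh (z - Complex.I*(π:ℂ)/4)).comp z
      ((hasDerivAt_id z).sub_const (Complex.I*(π:ℂ)/4))).congr_deriv (mul_one _)
  have hd2 : HasDerivAt (fun w => Complex.sinh (w + Complex.I*(π:ℂ)/4))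
      (Complex.cosh (z + Complex.I*(π:ℂ)/4)) z := by
    exact ((Complex.hasDerivAt_sinh (z + Complex.I*(π:ℂ)/4)).comp z
      ((hasDerivAt_id z).add_const (Complex.I*(π:ℂ)/4))).congr_deriv (mul_one _)
  have := hd1.div hd2 hp
  refine this.congr_deriv ?_
  rw [wronsk]

lemma hasDerivAt_phi_zpow (n : ℤ) (x : ℝ) :
    HasDerivAt (fun t : ℝ => phi (t:ℂ) ^ n)
      (2*(n:ℂ)*Complex.I * phi (x:ℂ) ^ n / Complex.cosh (2*(x:ℂ))) x := by
  have hm := spB_ne x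
  have hp := spA_ne x
  have hu : phi (x:ℂ) ≠ 0 := phi_ne x
  have h2 : HasDerivAt (fun w : ℂ => phi w ^ n)
      ((n:ℂ) * phi (x:ℂ) ^ (n-1) * (Complex.I / (Complex.sinh ((x:ℂ) + Complex.I * (π:ℂ)/4))^2)) (x:ℂ) :=
    (hasDerivAt_zpow n (phi (x:ℂ)) (Or.inl hu)).comp (x:ℂ) (hasDerivAt_phi (x:ℂ) hp)
  have h3 := h2.comp_ofReal
  convert h3 using 1
  have hphi : phi (x:ℂ) = Complex.sinh ((x:ℂ) - Complex.I * (π:ℂ)/4) / Complex.sinh ((x:ℂ) + Complex.I * (π:ℂ)/4) := rfl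
  have hstep : phi (x:ℂ) ^ (n-1) = phi (x:ℂ) ^ n *
      (Complex.sinh ((x:ℂ) + Complex.I * (π:ℂ)/4) / Complex.sinh ((x:ℂ) - Complex.I * (π:ℂ)/4)) := by
    rw [zpow_sub_one₀ hu, div_eq_mul_inv]
    congr 1
    rw [hphi, inv_div, div_eq_mul_inv]
  have key : ∀ K s1 s2 : ℂ, s1 ≠ 0 → s2 ≠ 0 →
      2*(n:ℂ)*Complex.I*K / (2*s1*s2) = (n:ℂ)*(K*(s2/s1))*(Complex.I/s2^2) := by
    intro K s1 s2 h1 h2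
    field_simp
  rw [hstep, ← prod_eq (x:ℂ)]
  exact key _ _ _ hm hp

lemma coshC_ne (x : ℝ) : Complex.cosh (2*(x:ℂ)) ≠ 0 := by
  rw [← prod_eq]
  exact mul_ne_zero (mul_ne_zero two_ne_zero (spB_ne x)) (spA_ne x)

lemma cont_phi : Continuous (fun x : ℝ => phi (x:ℂ)) := by
  have h : (fun x : ℝ => phi (x:ℂ)) =
      fun x : ℝ => Complex.sinh ((x:ℂ) - Complex.I*(π:ℂ)/4) / Complex.sinh ((x:ℂ) + Complex.I*(π:ℂ)/4) := rfl
  rw [h]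
  exact (Complex.continuous_sinh.comp (by continuity)).div
    (Complex.continuous_sinh.comp (by continuity)) fun x => spA_ne x

lemma cont_phi_zpow (n : ℤ) : Continuous fun x : ℝ => phi (x:ℂ) ^ n :=
  cont_phi.zpow₀ n fun x => Or.inl (phi_ne x)

lemma cont_integrand (n : ℤ) : Continuous fun x : ℝ => phi (x:ℂ) ^ n / Complex.cosh (2*(x:ℂ)) :=
  (cont_phi_zpow n).div (Complex.continuous_cosh.comp (by continuity)) fun x => coshC_ne x

lemma integral_phi (n : ℤ) (hn : (n:ℂ) ≠ 0) (Λ : ℝ) :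
    ∫ x in (-Λ)..Λ, phi (x:ℂ) ^ n / Complex.cosh (2*(x:ℂ))
      = (phi ((Λ:ℝ):ℂ) ^ n - phi ((-Λ:ℝ):ℂ) ^ n) / (2*(n:ℂ)*Complex.I) := by
  have h2nI : (2*(n:ℂ)*Complex.I) ≠ 0 :=
    mul_ne_zero (mul_ne_zero two_ne_zero hn) Complex.I_ne_zero
  have hderiv : ∀ x ∈ Set.uIcc (-Λ) Λ, HasDerivAt (fun t : ℝ => phi (t:ℂ) ^ n / (2*(n:ℂ)*Complex.I))
      (phi (x:ℂ) ^ n / Complex.cosh (2*(x:ℂ))) x := by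
    intro x _
    have := (hasDerivAt_phi_zpow n x).div_const (2*(n:ℂ)*Complex.I)
    refine this.congr_deriv ?_
    rw [div_div, mul_comm (Complex.cosh (2*(x:ℂ))) (2*(n:ℂ)*Complex.I), ← div_div,
      mul_div_cancel_left₀ _ h2nI]
  have hint : IntervalIntegrable (fun x : ℝ => phi (x:ℂ) ^ n / Complex.cosh (2*(x:ℂ)))
      MeasureTheory.volume (-Λ) Λ := (cont_integrand n).intervalIntegrable (-Λ) Λ
  rw [intervalIntegral.integral_eq_sub_of_hasDerivAt hderiv hint]
  rw [div_sub_div_same]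

lemma phi_neg (x : ℝ) : phi ((-x : ℝ):ℂ) = (phi (x:ℂ))⁻¹ := by
  unfold phi
  rw [show ((-x:ℝ):ℂ) - Complex.I*(π:ℂ)/4 = -((x:ℂ) + Complex.I*(π:ℂ)/4) by push_cast; ring,
    show ((-x:ℝ):ℂ) + Complex.I*(π:ℂ)/4 = -((x:ℂ) - Complex.I*(π:ℂ)/4) by push_cast; ring,
    Complex.sinh_neg, Complex.sinh_neg, inv_div, neg_div_neg_eq]

lemma phi_sq (Λ p₀ : ℝ) (hΛ : 0 < Λ) (hp1 : 0 < p₀) (hp2 : p₀ < π/2)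
    (hcos : Real.cos p₀ = 1 / Real.cosh (2*Λ)) :
    phi ((Λ:ℝ):ℂ) ^ (2:ℕ) = Complex.exp (2*(p₀:ℂ)*Complex.I) := by
  have hchpos : 0 < Real.cosh (2*Λ) := Real.cosh_pos _
  have hchne : Real.cosh (2*Λ) ≠ 0 := hchpos.ne'
  have hrel : Real.cosh (2*Λ)^2 = 1 + Real.sinh (2*Λ)^2 := by
    have := Real.cosh_sq_sub_sinh_sq (2*Λ)
    linarith
  have hsin : Real.sin p₀ = Real.sinh (2*Λ) / Real.cosh (2*Λ) := by
    have h1 := Real.sin_sq_add_cos_sq p₀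
    have hs2 : Real.sin p₀ ^ 2 = (Real.sinh (2*Λ) / Real.cosh (2*Λ))^2 := by
      rw [div_pow]
      rw [hcos] at h1
      field_simp at h1 ⊢
      nlinarith [h1, hrel]
    have hsnn : 0 ≤ Real.sin p₀ := by
      apply Real.sin_nonneg_of_nonneg_of_le_pi hp1.le
      have := Real.pi_pos
      linarith
    have htnn : 0 ≤ Real.sinh (2*Λ)/Real.cosh (2*Λ) :=
      div_nonneg (Real.sinh_nonneg_iff.mpr (by linarith)) hchpos.le
    rw [← Real.sqrt_sq hsnn, hs2, Real.sqrt_sq htnn]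
  have hcos2 : Real.cos (2*p₀) = (2 - Real.cosh (2*Λ)^2)/Real.cosh (2*Λ)^2 := by
    rw [Real.cos_two_mul, hcos]
    field_simp
  have hsin2 : Real.sin (2*p₀) = 2*Real.sinh (2*Λ)/Real.cosh (2*Λ)^2 := by
    rw [Real.sin_two_mul, hsin, hcos]
    field_simp
  -- complex side
  have hshc : ((Real.sinh (2*Λ) : ℝ):ℂ) = 2 * Complex.sinh (Λ:ℂ) * Complex.cosh (Λ:ℂ) := by
    rw [Complex.ofReal_sinh]
    push_cast
    rw [Complex.sinh_two_mul]
  have hC2S2 := Complex.cosh_sq_sub_sinh_sq (Λ:ℂ)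
  have hA : Complex.sinh ((Λ:ℂ) - Complex.I*(π:ℂ)/4)^2
      = ((Real.sqrt 2/2:ℝ):ℂ)^2 * (-1 - Complex.I*((Real.sinh (2*Λ) : ℝ):ℂ)) := by
    rw [shiftB, mul_pow, hshc]
    linear_combination ((Real.sqrt 2/2:ℝ):ℂ)^2 *
      (Complex.cosh (Λ:ℂ)^2 * Complex.I_sq - hC2S2)
  have hB : Complex.sinh ((Λ:ℂ) + Complex.I*(π:ℂ)/4)^2
      = ((Real.sqrt 2/2:ℝ):ℂ)^2 * (-1 + Complex.I*((Real.sinh (2*Λ) : ℝ):ℂ)) := by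
    rw [shiftA, mul_pow, hshc]
    linear_combination ((Real.sqrt 2/2:ℝ):ℂ)^2 *
      (Complex.cosh (Λ:ℂ)^2 * Complex.I_sq - hC2S2)
  have hcne : (((Real.sqrt 2/2:ℝ):ℂ))^2 ≠ 0 := by
    rw [hc2]; norm_num
  have hBne : (-1 + Complex.I*((Real.sinh (2*Λ) : ℝ):ℂ)) ≠ 0 := by
    intro h
    have := hB
    rw [h, mul_zero] at this
    exact (spA_ne Λ) (pow_eq_zero_iff (n := 2) (by norm_num) |>.mp this)
  have hexp : Complex.exp (2*(p₀:ℂ)*Complex.I)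
      = ((Real.cos (2*p₀) : ℝ):ℂ) + ((Real.sin (2*p₀) : ℝ):ℂ)*Complex.I := by
    rw [show 2*(p₀:ℂ)*Complex.I = (((2*p₀ : ℝ)):ℂ)*Complex.I by push_cast; ring,
      Complex.exp_mul_I, ← Complex.ofReal_cos, ← Complex.ofReal_sin]
  have hphi : phi ((Λ:ℝ):ℂ) ^ (2:ℕ)
      = Complex.sinh ((Λ:ℂ) - Complex.I*(π:ℂ)/4)^2 / Complex.sinh ((Λ:ℂ) + Complex.I*(π:ℂ)/4)^2 := by
    rw [← div_pow]; rfl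
  have hchnec : ((Real.cosh (2*Λ) : ℝ):ℂ) ≠ 0 := Complex.ofReal_ne_zero.mpr hchne
  have hrelc : ((Real.cosh (2*Λ) : ℝ):ℂ)^2 = 1 + ((Real.sinh (2*Λ) : ℝ):ℂ)^2 := by
    exact_mod_cast hrel
  have hcos2c : ((Real.cos (2*p₀) : ℝ):ℂ)
      = (2 - ((Real.cosh (2*Λ):ℝ):ℂ)^2)/((Real.cosh (2*Λ):ℝ):ℂ)^2 := by
    rw [hcos2]; push_cast; ring
  have hsin2c : ((Real.sin (2*p₀) : ℝ):ℂ)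
      = 2*((Real.sinh (2*Λ):ℝ):ℂ)/((Real.cosh (2*Λ):ℝ):ℂ)^2 := by
    rw [hsin2]; push_cast; ring
  have key : ∀ sh ch : ℂ, ch ≠ 0 → ch^2 = 1 + sh^2 →
      (-1 - Complex.I*sh) = ((2 - ch^2)/ch^2 + (2*sh/ch^2)*Complex.I) * (-1 + Complex.I*sh) := by
    intro sh ch h0 h1
    field_simp
    linear_combination (-2*sh^2)*Complex.I_sq - 2*h1
  rw [hphi, hA, hB, hexp, hcos2c, hsin2c, mul_div_mul_left _ _ hcne, div_eq_iff hBne]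
  exact key _ _ hchnec hrelc

lemma key2 (U V S u v s P Q : ℂ) (hU : U ≠ 0) (hV : V ≠ 0) (hs : s ≠ 0)
    (hP : P ≠ 0) (hQ : Q ≠ 0)
    (hgeom : S * (u - v) = U - V)
    (hdiff : u - v = Complex.I * s / (P * Q)) :
    (U * V⁻¹ + U⁻¹ * V - 2) / s^2 = -S^2 / (P^2 * Q^2 * (U*V)) := by
  have hUV : U * V⁻¹ + U⁻¹ * V - 2 = (U - V)^2 / (U*V) := by
    field_simp
    ring
  have hdsq : (U - V)^2 = S^2 * (Complex.I*s/(P*Q))^2 := by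
    rw [← hgeom, hdiff]
    ring
  have hIs : (Complex.I*s/(P*Q))^2 = -s^2/(P^2*Q^2) := by
    rw [div_pow, mul_pow, Complex.I_sq, mul_pow]
    ring
  rw [hUV, hdsq, hIs]
  have hfin : S^2 * (-s^2/(P^2*Q^2)) / (U*V) / s^2
      = (-S^2/(P^2*Q^2*(U*V))) * (s^2/s^2) := by ring
  rw [hfin, div_self (pow_ne_zero 2 hs), mul_one]

lemma keycomb (P Q u v s Cx Cy : ℂ) (hu : u ≠ 0) (hv : v ≠ 0) (hs : s ≠ 0)
    (hCx : Cx ≠ 0) (hCy : Cy ≠ 0)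
    (hrel : (u - v)^2 * Cx * Cy = -4 * u * v * s^2) :
    (P*(u/v) + Q*(v/u) - 2)/s^2 + (P*(v/u) + Q*(u/v) - 2)/s^2
      - 2*((P + Q - 2)/s^2) = -4*(P+Q)/(Cx*Cy) := by
  have hsq : (u-v)^2 = -4*u*v*s^2/(Cx*Cy) := by
    rw [eq_div_iff (mul_ne_zero hCx hCy)]
    linear_combination hrel
  have hsum : (P*(u/v) + Q*(v/u) - 2) + (P*(v/u) + Q*(u/v) - 2) - 2*(P + Q - 2)
      = (P+Q)*(u-v)^2/(u*v) := by
    field_simp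
    ring
  have hre : (P*(u/v) + Q*(v/u) - 2)/s^2 + (P*(v/u) + Q*(u/v) - 2)/s^2 - 2*((P + Q - 2)/s^2)
      = ((P*(u/v) + Q*(v/u) - 2) + (P*(v/u) + Q*(u/v) - 2) - 2*(P + Q - 2))/s^2 := by ring
  rw [hre, hsum, hsq]
  field_simp

lemma sinh_xy_ne (x y : ℝ) (h : x ≠ y) : Complex.sinh ((x:ℂ) - (y:ℂ)) ≠ 0 := by
  rw [show (x:ℂ) - (y:ℂ) = ((x - y : ℝ):ℂ) by push_cast; ring, ← Complex.ofReal_sinh]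
  exact Complex.ofReal_ne_zero.mpr (Real.sinh_ne_zero.mpr (sub_ne_zero.mpr h))

lemma hdiff_real (x y : ℝ) : phi (x:ℂ) - phi (y:ℂ)
    = Complex.I * Complex.sinh ((x:ℂ) - (y:ℂ)) /
      (Complex.sinh ((x:ℂ) + Complex.I*(π:ℂ)/4) * Complex.sinh ((y:ℂ) + Complex.I*(π:ℂ)/4)) := by
  have h1 : phi (x:ℂ) - phi (y:ℂ)
      = (Complex.sinh ((x:ℂ) - Complex.I*(π:ℂ)/4) * Complex.sinh ((y:ℂ) + Complex.I*(π:ℂ)/4)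
        - Complex.sinh ((x:ℂ) + Complex.I*(π:ℂ)/4) * Complex.sinh ((y:ℂ) - Complex.I*(π:ℂ)/4)) /
        (Complex.sinh ((x:ℂ) + Complex.I*(π:ℂ)/4) * Complex.sinh ((y:ℂ) + Complex.I*(π:ℂ)/4)) :=
    div_sub_div _ _ (spA_ne x) (spA_ne y)
  rw [h1, show Complex.sinh ((x:ℂ) - Complex.I*(π:ℂ)/4) * Complex.sinh ((y:ℂ) + Complex.I*(π:ℂ)/4)
        - Complex.sinh ((x:ℂ) + Complex.I*(π:ℂ)/4) * Complex.sinh ((y:ℂ) - Complex.I*(π:ℂ)/4)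
      = Complex.sinh ((x:ℂ) - Complex.I*(π:ℂ)/4) * Complex.sinh ((y:ℂ) + Complex.I*(π:ℂ)/4)
        - Complex.sinh ((y:ℂ) - Complex.I*(π:ℂ)/4) * Complex.sinh ((x:ℂ) + Complex.I*(π:ℂ)/4) by ring,
    diff_eq]

lemma f_eq_g (k : ℕ) (x y : ℝ) (hxy : x ≠ y) :
    (phi (x:ℂ) ^ k * phi (y:ℂ) ^ (-(k:ℤ)) + phi (x:ℂ) ^ (-(k:ℤ)) * phi (y:ℂ) ^ k - 2) /
      Complex.sinh ((x:ℂ) - (y:ℂ)) ^ 2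
    = -(∑ i ∈ Finset.range k, phi (x:ℂ) ^ i * phi (y:ℂ) ^ (k-1-i))^2 /
      (Complex.sinh ((x:ℂ) + Complex.I*(π:ℂ)/4)^2 * Complex.sinh ((y:ℂ) + Complex.I*(π:ℂ)/4)^2
        * (phi (x:ℂ) ^ k * phi (y:ℂ) ^ k)) := by
  rw [zpow_neg, zpow_neg, zpow_natCast, zpow_natCast]
  exact key2 (phi (x:ℂ) ^ k) (phi (y:ℂ) ^ k)
    (∑ i ∈ Finset.range k, phi (x:ℂ) ^ i * phi (y:ℂ) ^ (k-1-i))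
    (phi (x:ℂ)) (phi (y:ℂ)) (Complex.sinh ((x:ℂ) - (y:ℂ)))
    (Complex.sinh ((x:ℂ) + Complex.I*(π:ℂ)/4)) (Complex.sinh ((y:ℂ) + Complex.I*(π:ℂ)/4))
    (pow_ne_zero _ (phi_ne x)) (pow_ne_zero _ (phi_ne y)) (sinh_xy_ne x y hxy)
    (spA_ne x) (spA_ne y) (geom_sum₂_mul _ _ k) (hdiff_real x y)


lemma hrel_real (x y : ℝ) :
    (phi (x:ℂ) - phi (y:ℂ))^2 * Complex.cosh (2*(x:ℂ)) * Complex.cosh (2*(y:ℂ))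
      = -4 * phi (x:ℂ) * phi (y:ℂ) * Complex.sinh ((x:ℂ) - (y:ℂ))^2 := by
  have hphx : phi (x:ℂ) = Complex.sinh ((x:ℂ) - Complex.I*(π:ℂ)/4) / Complex.sinh ((x:ℂ) + Complex.I*(π:ℂ)/4) := rfl
  have hphy : phi (y:ℂ) = Complex.sinh ((y:ℂ) - Complex.I*(π:ℂ)/4) / Complex.sinh ((y:ℂ) + Complex.I*(π:ℂ)/4) := rfl
  rw [hdiff_real, ← prod_eq (x:ℂ), ← prod_eq (y:ℂ), hphx, hphy]
  have h1 := spA_ne x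
  have h2 := spA_ne y
  set ax := Complex.sinh ((x:ℂ) - Complex.I*(π:ℂ)/4)
  set bx := Complex.sinh ((x:ℂ) + Complex.I*(π:ℂ)/4)
  set ay := Complex.sinh ((y:ℂ) - Complex.I*(π:ℂ)/4)
  set by' := Complex.sinh ((y:ℂ) + Complex.I*(π:ℂ)/4)
  set s := Complex.sinh ((x:ℂ) - (y:ℂ))
  field_simp
  linear_combination (4*s^2*ax*ay) * Complex.I_sq

lemma fcomb (n : ℕ) (x y : ℝ) (hxy : x ≠ y) :
    (phi (x:ℂ) ^ (n+2) * phi (y:ℂ) ^ (-((n+2:ℕ):ℤ)) + phi (x:ℂ) ^ (-((n+2:ℕ):ℤ)) * phi (y:ℂ) ^ (n+2) - 2) /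
      Complex.sinh ((x:ℂ) - (y:ℂ)) ^ 2
    + (phi (x:ℂ) ^ n * phi (y:ℂ) ^ (-(n:ℤ)) + phi (x:ℂ) ^ (-(n:ℤ)) * phi (y:ℂ) ^ n - 2) /
      Complex.sinh ((x:ℂ) - (y:ℂ)) ^ 2
    - 2 * ((phi (x:ℂ) ^ (n+1) * phi (y:ℂ) ^ (-((n+1:ℕ):ℤ)) + phi (x:ℂ) ^ (-((n+1:ℕ):ℤ)) * phi (y:ℂ) ^ (n+1) - 2) /
      Complex.sinh ((x:ℂ) - (y:ℂ)) ^ 2)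
    = -4*(phi (x:ℂ) ^ (n+1) * (phi (y:ℂ) ^ (n+1))⁻¹ + (phi (x:ℂ) ^ (n+1))⁻¹ * phi (y:ℂ) ^ (n+1))
        / (Complex.cosh (2*(x:ℂ)) * Complex.cosh (2*(y:ℂ))) := by
  have hu := phi_ne x
  have hv := phi_ne y
  have hs := sinh_xy_ne x y hxy
  have hCx := coshC_ne x
  have hCy := coshC_ne y
  simp only [zpow_neg, zpow_natCast]
  set u := phi (x:ℂ)
  set v := phi (y:ℂ)
  set s := Complex.sinh ((x:ℂ) - (y:ℂ))
  set P := u^(n+1) * (v^(n+1))⁻¹ with hP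
  set Q := (u^(n+1))⁻¹ * v^(n+1) with hQ
  have e1 : u^(n+2) * (v^(n+2))⁻¹ = P*(u/v) := by
    rw [hP, pow_succ u (n+1), pow_succ v (n+1), mul_inv]
    field_simp
  have e2 : (u^(n+2))⁻¹ * v^(n+2) = Q*(v/u) := by
    rw [hQ, pow_succ u (n+1), pow_succ v (n+1), mul_inv]
    field_simp
    try ring
  have e3 : u^n * (v^n)⁻¹ = P*(v/u) := by
    rw [hP, pow_succ u n, pow_succ v n, mul_inv]
    field_simp [pow_ne_zero n hu, pow_ne_zero n hv]
  have e4 : (u^n)⁻¹ * v^n = Q*(u/v) := by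
    rw [hQ, pow_succ u n, pow_succ v n, mul_inv]
    field_simp [pow_ne_zero n hu, pow_ne_zero n hv]
  rw [e1, e2, e3, e4]
  exact keycomb P Q u v s _ _ hu hv hs hCx hCy (hrel_real x y)

noncomputable def gg (k : ℕ) (x y : ℝ) : ℂ :=
  -(∑ i ∈ Finset.range k, phi (x:ℂ) ^ i * phi (y:ℂ) ^ (k-1-i))^2 /
   (Complex.sinh ((x:ℂ) + Complex.I*(π:ℂ)/4)^2 * Complex.sinh ((y:ℂ) + Complex.I*(π:ℂ)/4)^2
     * (phi (x:ℂ) ^ k * phi (y:ℂ) ^ k))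

lemma f_eq_gg (k : ℕ) (x y : ℝ) (hxy : x ≠ y) :
    (phi (x:ℂ) ^ k * phi (y:ℂ) ^ (-(k:ℤ)) + phi (x:ℂ) ^ (-(k:ℤ)) * phi (y:ℂ) ^ k - 2) /
      Complex.sinh ((x:ℂ) - (y:ℂ)) ^ 2 = gg k x y := f_eq_g k x y hxy

lemma spc : Continuous fun x : ℝ => Complex.sinh ((x:ℂ) + Complex.I*(π:ℂ)/4) :=
  Complex.continuous_sinh.comp (by continuity)

lemma coshc : Continuous fun x : ℝ => Complex.cosh (2*(x:ℂ)) :=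
  Complex.continuous_cosh.comp (by continuity)

lemma gg_cont (k : ℕ) : Continuous (Function.uncurry (gg k)) := by
  apply Continuous.div₀
  · exact ((continuous_finset_sum _ fun i _ =>
      ((cont_phi.comp continuous_fst).pow i).mul
        ((cont_phi.comp continuous_snd).pow (k-1-i))).pow 2).neg
  · exact (((spc.comp continuous_fst).pow 2).mul ((spc.comp continuous_snd).pow 2)).mul
      (((cont_phi.comp continuous_fst).pow k).mul ((cont_phi.comp continuous_snd).pow k))
  · intro p
    exact mul_ne_zero (mul_ne_zero (pow_ne_zero _ (spA_ne _)) (pow_ne_zero _ (spA_ne _)))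
      (mul_ne_zero (pow_ne_zero _ (phi_ne _)) (pow_ne_zero _ (phi_ne _)))

lemma gg_int (k : ℕ) (x a b : ℝ) :
    IntervalIntegrable (gg k x) MeasureTheory.volume a b :=
  ((gg_cont k).comp (Continuous.prodMk_right x)).intervalIntegrable a b

lemma ggF_cont (k : ℕ) (a b : ℝ) : Continuous fun x => ∫ y in a..b, gg k x y :=
  intervalIntegral.continuous_parametric_intervalIntegral_of_continuous' (gg_cont k) a b

lemma gcomb (n : ℕ) (x y : ℝ) (hxy : x ≠ y) :
    gg (n+2) x y + gg n x y - 2 * gg (n+1) x y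
    = -4*(phi (x:ℂ) ^ (n+1) * (phi (y:ℂ) ^ (n+1))⁻¹ + (phi (x:ℂ) ^ (n+1))⁻¹ * phi (y:ℂ) ^ (n+1))
        / (Complex.cosh (2*(x:ℂ)) * Complex.cosh (2*(y:ℂ))) := by
  rw [← f_eq_gg (n+2) x y hxy, ← f_eq_gg n x y hxy, ← f_eq_gg (n+1) x y hxy]
  exact fcomb n x y hxy

lemma ae_ne (x : ℝ) : ∀ᵐ (y : ℝ) ∂MeasureTheory.volume, y ≠ x := by
  refine MeasureTheory.ae_iff.mpr ?_
  simpa using MeasureTheory.measure_singleton (μ := MeasureTheory.volume) x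

lemma contA (k : ℕ) : Continuous fun y : ℝ => phi (y:ℂ)^k / Complex.cosh (2*(y:ℂ)) :=
  (cont_phi.pow k).div coshc coshC_ne

lemma contB (k : ℕ) : Continuous fun y : ℝ => (phi (y:ℂ)^k)⁻¹ / Complex.cosh (2*(y:ℂ)) :=
  ((cont_phi.pow k).inv₀ fun y => pow_ne_zero k (phi_ne y)).div coshc coshC_ne

lemma intA (k : ℕ) (hk : k ≠ 0) (Λ : ℝ) :
    ∫ y in (-Λ)..Λ, phi (y:ℂ)^k / Complex.cosh (2*(y:ℂ))
      = (phi ((Λ:ℝ):ℂ)^k - (phi ((Λ:ℝ):ℂ)^k)⁻¹) / (2*(k:ℂ)*Complex.I) := by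
  have h := integral_phi (k:ℤ) (by exact_mod_cast Nat.cast_ne_zero.mpr hk) Λ
  simp only [zpow_natCast] at h
  rw [phi_neg, inv_pow] at h
  push_cast at h
  exact h

lemma intB (k : ℕ) (hk : k ≠ 0) (Λ : ℝ) :
    ∫ y in (-Λ)..Λ, (phi (y:ℂ)^k)⁻¹ / Complex.cosh (2*(y:ℂ))
      = ((phi ((Λ:ℝ):ℂ)^k)⁻¹ - phi ((Λ:ℝ):ℂ)^k) / (2*(-(k:ℂ))*Complex.I) := by
  have h := integral_phi (-(k:ℤ)) (by
    simp only [Int.cast_neg, Int.cast_natCast, ne_eq, neg_eq_zero]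
    exact Nat.cast_ne_zero.mpr hk) Λ
  simp only [zpow_neg, zpow_natCast] at h
  rw [phi_neg, inv_pow, inv_inv] at h
  push_cast at h
  exact h

lemma Jmul (Λ p₀ : ℝ) (hΛ : 0 < Λ) (hp1 : 0 < p₀) (hp2 : p₀ < π/2)
    (hcos : Real.cos p₀ = 1/Real.cosh (2*Λ)) (k : ℕ) (hk : k ≠ 0) :
    ((phi ((Λ:ℝ):ℂ)^k - (phi ((Λ:ℝ):ℂ)^k)⁻¹) / (2*(k:ℂ)*Complex.I)) *
    (((phi ((Λ:ℝ):ℂ)^k)⁻¹ - phi ((Λ:ℝ):ℂ)^k) / (2*(-(k:ℂ))*Complex.I))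
    = (2 - 2*((Real.cos (2*k*p₀) : ℝ):ℂ)) / (4*(k:ℂ)^2) := by
  have hW : phi ((Λ:ℝ):ℂ) ^ k ≠ 0 := pow_ne_zero _ (phi_ne Λ)
  have h2 : (phi ((Λ:ℝ):ℂ) ^ k)^2 = Complex.exp (((2*k*p₀ : ℝ) : ℂ) * Complex.I) := by
    rw [← pow_mul, mul_comm k 2, pow_mul, phi_sq Λ p₀ hΛ hp1 hp2 hcos, ← Complex.exp_nat_mul]
    congr 1
    push_cast
    ring
  have hcosC : 2*((Real.cos (2*k*p₀) : ℝ):ℂ)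
      = Complex.exp (((2*k*p₀ : ℝ) : ℂ) * Complex.I) + (Complex.exp (((2*k*p₀ : ℝ) : ℂ) * Complex.I))⁻¹ := by
    rw [Complex.ofReal_cos, Complex.cos, ← Complex.exp_neg]
    ring
  have expand : (phi ((Λ:ℝ):ℂ)^k - (phi ((Λ:ℝ):ℂ)^k)⁻¹) * ((phi ((Λ:ℝ):ℂ)^k)⁻¹ - phi ((Λ:ℝ):ℂ)^k)
      = 2 - ((phi ((Λ:ℝ):ℂ)^k)^2 + ((phi ((Λ:ℝ):ℂ)^k)^2)⁻¹) := by
    field_simp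
    ring
  have hkc : (k:ℂ) ≠ 0 := Nat.cast_ne_zero.mpr hk
  rw [div_mul_div_comm, expand, h2, ← hcosC]
  rw [show (2*(k:ℂ)*Complex.I) * (2*(-(k:ℂ))*Complex.I) = -4*(k:ℂ)^2*Complex.I^2 by ring,
    Complex.I_sq]
  rw [show -4*(k:ℂ)^2*(-1) = 4*(k:ℂ)^2 by ring]

theorem stmt1 (Λ : ℝ) (hΛ : 0 < Λ) (p₀ : ℝ) (hp₀ : p₀ ∈ Set.Ioo 0 (π / 2))
    (hcos : Real.cos p₀ = 1 / Real.cosh (2 * Λ))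
    (G : ℕ → ℂ)
    (hG : ∀ m : ℕ, G m = (1 / (4 * (π : ℂ) ^ 2)) *
      ∫ x in (-Λ)..Λ, ∫ y in (-Λ)..Λ,
        (phi (x : ℂ) ^ m * phi (y : ℂ) ^ (-(m : ℤ)) +
          phi (x : ℂ) ^ (-(m : ℤ)) * phi (y : ℂ) ^ m - 2) /
          Complex.sinh ((x : ℂ) - (y : ℂ)) ^ 2)
    (m : ℕ) (hm : 1 ≤ m) :
    G (m + 1) + G (m - 1) - 2 * G m =
      ((-(1 / (π ^ 2 * (m : ℝ) ^ 2)) * (1 - Real.cos (2 * m * p₀)) : ℝ) : ℂ) := by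
  obtain ⟨hp1, hp2⟩ := hp₀
  obtain ⟨n, hn⟩ : ∃ n, m = n + 1 := ⟨m - 1, (Nat.succ_pred_eq_of_pos hm).symm⟩
  subst hn
  rw [show n + 1 + 1 = n + 2 by omega, show n + 1 - 1 = n by omega]
  have hGg : ∀ k : ℕ, G k = (1 / (4 * (π:ℂ)^2)) * ∫ x in (-Λ)..Λ, ∫ y in (-Λ)..Λ, gg k x y := by
    intro k
    rw [hG k]
    congr 1
    refine intervalIntegral.integral_congr fun x _ => ?_
    refine intervalIntegral.integral_congr_ae ?_
    filter_upwards [ae_ne x] with y hy _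
    exact f_eq_gg k x y (Ne.symm hy)
  have hFint : ∀ k : ℕ, IntervalIntegrable (fun x => ∫ y in (-Λ)..Λ, gg k x y)
      MeasureTheory.volume (-Λ) Λ :=
    fun k => (ggF_cont k (-Λ) Λ).intervalIntegrable _ _
  rw [hGg (n+2), hGg n, hGg (n+1)]
  have hfac : ∀ a b c' : ℂ, (1/(4*(π:ℂ)^2))*a + (1/(4*(π:ℂ)^2))*b - 2*((1/(4*(π:ℂ)^2))*c')
      = (1/(4*(π:ℂ)^2))*(a + b - 2*c') := fun a b c' => by ring
  rw [hfac]
  -- combine outer integrals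
  have hIsum : (∫ x in (-Λ)..Λ, ∫ y in (-Λ)..Λ, gg (n+2) x y)
      + (∫ x in (-Λ)..Λ, ∫ y in (-Λ)..Λ, gg n x y)
      - 2*(∫ x in (-Λ)..Λ, ∫ y in (-Λ)..Λ, gg (n+1) x y)
      = ∫ x in (-Λ)..Λ, ((∫ y in (-Λ)..Λ, gg (n+2) x y) + (∫ y in (-Λ)..Λ, gg n x y)
          - 2*(∫ y in (-Λ)..Λ, gg (n+1) x y)) := by
    rw [intervalIntegral.integral_sub ((hFint (n+2)).add (hFint n)) ((hFint (n+1)).const_mul 2),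
      intervalIntegral.integral_add (hFint (n+2)) (hFint n),
      intervalIntegral.integral_const_mul]
  rw [hIsum]
  -- pointwise in x
  have hpt : ∀ x : ℝ, (∫ y in (-Λ)..Λ, gg (n+2) x y) + (∫ y in (-Λ)..Λ, gg n x y)
      - 2*(∫ y in (-Λ)..Λ, gg (n+1) x y)
      = (-4 * (∫ y in (-Λ)..Λ, (phi (y:ℂ)^(n+1))⁻¹ / Complex.cosh (2*(y:ℂ))))
          * (phi (x:ℂ)^(n+1) / Complex.cosh (2*(x:ℂ)))
        + (-4 * (∫ y in (-Λ)..Λ, phi (y:ℂ)^(n+1) / Complex.cosh (2*(y:ℂ))))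
          * ((phi (x:ℂ)^(n+1))⁻¹ / Complex.cosh (2*(x:ℂ))) := by
    intro x
    have hA : (∫ y in (-Λ)..Λ, gg (n+2) x y) + (∫ y in (-Λ)..Λ, gg n x y)
        - 2*(∫ y in (-Λ)..Λ, gg (n+1) x y)
        = ∫ y in (-Λ)..Λ, (gg (n+2) x y + gg n x y - 2*gg (n+1) x y) := by
      rw [intervalIntegral.integral_sub ((gg_int (n+2) x (-Λ) Λ).add (gg_int n x (-Λ) Λ))
          ((gg_int (n+1) x (-Λ) Λ).const_mul 2),
        intervalIntegral.integral_add (gg_int (n+2) x (-Λ) Λ) (gg_int n x (-Λ) Λ),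
        intervalIntegral.integral_const_mul]
    rw [hA]
    have hB : (∫ y in (-Λ)..Λ, (gg (n+2) x y + gg n x y - 2*gg (n+1) x y))
        = ∫ y in (-Λ)..Λ, ((-4*(phi (x:ℂ)^(n+1)) / Complex.cosh (2*(x:ℂ)))
            * ((phi (y:ℂ)^(n+1))⁻¹ / Complex.cosh (2*(y:ℂ)))
          + (-4*(phi (x:ℂ)^(n+1))⁻¹ / Complex.cosh (2*(x:ℂ)))
            * (phi (y:ℂ)^(n+1) / Complex.cosh (2*(y:ℂ)))) := by
      refine intervalIntegral.integral_congr_ae ?_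
      filter_upwards [ae_ne x] with y hy _
      rw [gcomb n x y (Ne.symm hy)]
      have hsplit : ∀ P Pi B Bi Cx Cy : ℂ, Cx ≠ 0 → Cy ≠ 0 →
          -4*(P*Bi + Pi*B)/(Cx*Cy) = (-4*P/Cx)*(Bi/Cy) + (-4*Pi/Cx)*(B/Cy) := by
        intro P Pi B Bi Cx Cy h1 h2
        field_simp
        ring
      exact hsplit _ _ _ _ _ _ (coshC_ne x) (coshC_ne y)
    rw [hB, intervalIntegral.integral_add
        (((contB (n+1)).intervalIntegrable (-Λ) Λ).const_mul _)
        (((contA (n+1)).intervalIntegrable (-Λ) Λ).const_mul _),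
      intervalIntegral.integral_const_mul, intervalIntegral.integral_const_mul]
    ring
  rw [intervalIntegral.integral_congr fun x _ => hpt x]
  rw [intervalIntegral.integral_add
      (((contA (n+1)).intervalIntegrable (-Λ) Λ).const_mul _)
      (((contB (n+1)).intervalIntegrable (-Λ) Λ).const_mul _),
    intervalIntegral.integral_const_mul, intervalIntegral.integral_const_mul]
  rw [intA (n+1) (by omega) Λ, intB (n+1) (by omega) Λ]
  have hfac2 : ∀ A B : ℂ, (-4*B)*A + (-4*A)*B = -8*(A*B) := fun A B => by ring
  rw [hfac2, Jmul Λ p₀ hΛ hp1 hp2 hcos (n+1) (by omega)]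
  have hπ : (π:ℂ) ≠ 0 := Complex.ofReal_ne_zero.mpr Real.pi_ne_zero
  have hkc : ((n:ℂ)+1) ≠ 0 := by
    have h0 : ((n+1:ℕ):ℂ) ≠ 0 := Nat.cast_ne_zero.mpr (by omega)
    push_cast at h0
    exact h0
  push_cast
  field_simp
  ring
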